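/- Fix integers k ≥ 4 and t ≥ 2, set r = (k−1), and consider the function n(d) = (k−1)(d−k+3)^{k−1} (order from the first directed construction) versus v(d) = k·⌊d/2⌋^k (Vetrík's order). Then for all integers d with 2k + 2·log₂ k − 5 ≤ d ≤ 2^k(1 − 1/k) − k² + 4k − 4 and d even and k sufficiently large, n(d) > v(d). -/

import Mathlib

open Real

private lemma bern_low (a δ : ℝ) (n : ℕ) (ha : 0 < a) (hδ : 0 ≤ δ) :
    a ^ n * (1 + n * (δ / a)) ≤ (a + δ) ^ n := by
  have hda : (-2 : ℝ) ≤ δ / a := by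
    have : (0:ℝ) ≤ δ / a := by positivity
    linarith
  have h1 : (1 : ℝ) + n * (δ / a) ≤ (1 + δ / a) ^ n := one_add_mul_le_pow hda n
  calc a ^ n * (1 + n * (δ / a)) ≤ a ^ n * (1 + δ / a) ^ n := by
        apply mul_le_mul_of_nonneg_left h1 (pow_nonneg ha.le n)
    _ = (a * (1 + δ / a)) ^ n := (mul_pow _ _ _).symm
    _ = (a + δ) ^ n := by rw [mul_add, mul_one, mul_div_cancel₀ _ ha.ne']

private lemma bern_up (a δ : ℝ) (n : ℕ) (ha : 0 < a) (hδ : 0 ≤ δ) (hδa : δ ≤ a) :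
    (a + δ) ^ n * (a - n * δ) ≤ a ^ (n + 1) := by
  rcases le_or_gt (a - n * δ) 0 with h | h
  · exact le_trans (mul_nonpos_of_nonneg_of_nonpos (by positivity) h)
      (pow_pos ha (n + 1)).le
  · have ht0 : 0 ≤ δ / a := by positivity
    have ht1 : δ / a ≤ 1 := (div_le_one ha).mpr hδa
    have hb : 1 + (n : ℝ) * (-(δ / a)) ≤ (1 + -(δ / a)) ^ n :=
      one_add_mul_le_pow (by linarith) n
    have hb' : a - (n : ℝ) * δ ≤ a * (1 - δ / a) ^ n := by
      have := mul_le_mul_of_nonneg_left hb ha.le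
      calc a - (n : ℝ) * δ = a * (1 + (n : ℝ) * (-(δ / a))) := by
            field_simp
            ring
        _ ≤ a * (1 + -(δ / a)) ^ n := this
        _ = a * (1 - δ / a) ^ n := by ring_nf
    calc (a + δ) ^ n * (a - n * δ) ≤ (a + δ) ^ n * (a * (1 - δ / a) ^ n) := by
          apply mul_le_mul_of_nonneg_left hb' (by positivity)
      _ = a * ((a + δ) * (1 - δ / a)) ^ n := by rw [mul_pow]; ring
      _ ≤ a * a ^ n := by
          apply mul_le_mul_of_nonneg_left _ ha.le
          apply pow_le_pow_left₀
          · have : (a + δ) * (1 - δ / a) = (a ^ 2 - δ ^ 2) / a := by field_simp; ring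
            rw [this]
            have h2 : 0 ≤ a ^ 2 - δ ^ 2 := by nlinarith
            positivity
          · have : (a + δ) * (1 - δ / a) = a - δ ^ 2 / a := by field_simp; ring
            rw [this]
            have : 0 ≤ δ ^ 2 / a := by positivity
            linarith
      _ = a ^ (n + 1) := by ring

private lemma caseA_mono (s smax : ℝ) (n : ℕ) (hs : 0 < s) (hss : s ≤ smax)
    (h1 : smax < 1) (hns : 2 - smax ≤ n * s) :
    smax * (2 - smax) ^ n ≤ s * (2 - s) ^ n := by
  set a : ℝ := 2 - smax with hadef
  have ha : 0 < a := by simp only [hadef]; linarith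
  set δ : ℝ := smax - s with hδdef
  have hδ : 0 ≤ δ := by simp only [hδdef]; linarith
  have h2s : 2 - s = a + δ := by simp only [hadef, hδdef]; ring
  have hb := bern_low a δ n ha hδ
  have key : smax * a ≤ s * a + s * ((n:ℝ) * δ) := by
    have h3 : δ * (2 - smax) ≤ δ * ((n:ℝ) * s) := mul_le_mul_of_nonneg_left hns hδ
    have : smax = s + δ := by simp only [hδdef]; ring
    rw [this]; simp only [hadef] at h3 ⊢; nlinarith
  have step1 : smax * a ^ n ≤ s * (a ^ n * (1 + n * (δ / a))) := by
    have e : s * (a ^ n * (1 + n * (δ / a))) = (s * a + s * ((n:ℝ) * δ)) * a ^ n / a := by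
      field_simp
    have e2 : smax * a ^ n = smax * a * a ^ n / a := by
      field_simp
    rw [e, e2]
    apply (div_le_div_iff_of_pos_right ha).mpr
    exact mul_le_mul_of_nonneg_right key (pow_nonneg ha.le n)
  calc smax * (2 - smax) ^ n = smax * a ^ n := rfl
    _ ≤ s * (a ^ n * (1 + n * (δ / a))) := step1
    _ ≤ s * (a + δ) ^ n := mul_le_mul_of_nonneg_left hb hs.le
    _ = s * (2 - s) ^ n := by rw [h2s]

private lemma caseB_mono (s smin : ℝ) (n : ℕ) (hn : 1 ≤ n) (h0 : 0 < smin) (h1 : smin ≤ s)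
    (hKs : ((n : ℝ) + 1) * s ≤ 2) :
    smin * (2 - smin) ^ n ≤ s * (2 - s) ^ n := by
  have hs : 0 < s := h0.trans_le h1
  have hn1 : (1:ℝ) ≤ (n:ℝ) := by exact_mod_cast hn
  have hs1 : s ≤ 1 := by nlinarith
  set a : ℝ := 2 - s with hadef
  have ha : 0 < a := by simp only [hadef]; linarith
  set δ : ℝ := s - smin with hδdef
  have hδ : 0 ≤ δ := by simp only [hδdef]; linarith
  have hδa : δ ≤ a := by simp only [hδdef, hadef]; linarith
  have h2 : 2 - smin = a + δ := by simp only [hadef, hδdef]; ring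
  have hup := bern_up a δ n ha hδ hδa
  have hans : 0 ≤ a - (n:ℝ) * s := by simp only [hadef]; nlinarith
  have hpos : 0 < a - (n:ℝ) * δ := by
    have : (n:ℝ) * δ < (n:ℝ) * s := by
      apply mul_lt_mul_of_pos_left _ (by linarith)
      simp only [hδdef]; linarith
    linarith
  have key : smin * a ≤ s * (a - (n:ℝ) * δ) := by
    have : s * (a - (n:ℝ)*δ) - smin * a = δ * (a - (n:ℝ)*s) := by
      simp only [hδdef]; ring
    nlinarith [mul_nonneg hδ hans]
  have chain : smin * (a + δ) ^ n * (a - (n:ℝ)*δ) ≤ s * a ^ n * (a - (n:ℝ)*δ) := by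
    calc smin * (a + δ) ^ n * (a - (n:ℝ)*δ) = smin * ((a + δ) ^ n * (a - (n:ℝ)*δ)) := by ring
      _ ≤ smin * a ^ (n+1) := mul_le_mul_of_nonneg_left hup h0.le
      _ = a ^ n * (smin * a) := by ring
      _ ≤ a ^ n * (s * (a - (n:ℝ)*δ)) := mul_le_mul_of_nonneg_left key (by positivity)
      _ = s * a ^ n * (a - (n:ℝ)*δ) := by ring
  have := le_of_mul_le_mul_right chain hpos
  rw [h2]
  exact this

private lemma keypoly_core (K L : ℝ) (hK : 20 ≤ K) (hL : 4 ≤ L)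
    (hcube : 3.549 * L^3 ≤ 4 * (L * K)) :
    (K + 2*L - 2) * (K + 0.69315*L*(K*(K-1)) + (L - 5/2)*(K-1)) < K*(K-1)^2*(L + 1/2) := by
  nlinarith [mul_nonneg (sub_nonneg.2 hL) (sub_nonneg.2 hK), sq_nonneg (L-4), sq_nonneg (K-20),
    mul_nonneg (mul_nonneg (sub_nonneg.2 hL) (sub_nonneg.2 hL)) (sub_nonneg.2 hK),
    mul_nonneg (sub_nonneg.2 hK) (sub_nonneg.2 hcube),
    mul_nonneg (sub_nonneg.2 hL) (sub_nonneg.2 hcube),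
    mul_pos (show (0:ℝ)<L by linarith) (show (0:ℝ)<K by linarith),
    sq_nonneg (L*K - 20*L), mul_nonneg (mul_nonneg (sub_nonneg.2 hL) (sub_nonneg.2 hK)) (sub_nonneg.2 hK)]

private lemma log_ge_one_sub_inv {x : ℝ} (hx : 0 < x) : 1 - 1/x ≤ Real.log x := by
  have h := Real.log_le_sub_one_of_pos (show (0:ℝ) < x⁻¹ by positivity)
  rw [Real.log_inv] at h
  have : 1/x = x⁻¹ := one_div x
  linarith

private lemma endpoint_lo (n : ℕ) (K L : ℝ) (hKn : (n:ℝ) = K - 1) (hK : 20 ≤ K)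
    (hLdef : Real.log K = L * Real.log 2) (hL4 : 4 ≤ L)
    (hcube : 3.549 * L^3 ≤ 4 * (L * K)) :
    K * (K + L - 5/2)^(n+1) < (K-1) * (K + 2*L - 2)^n := by
  have hL2 : (0:ℝ) < Real.log 2 := Real.log_pos (by norm_num)
  have hm1 : (0:ℝ) < K + L - 5/2 := by linarith
  have hx : (0:ℝ) < K + 2*L - 2 := by linarith
  have hK1 : (0:ℝ) < K - 1 := by linarith
  have hK0 : (0:ℝ) < K := by linarith
  have hdiv : 1/(K-1) + 0.69315*L + (L - 5/2)/K < (K-1)*((L + 1/2)/(K + 2*L - 2)) := by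
    have hcore := keypoly_core K L hK hL4 hcube
    have e1 : 1/(K-1) + 0.69315*L + (L - 5/2)/K
        = (K + 0.69315*L*(K*(K-1)) + (L - 5/2)*(K-1)) / ((K-1)*K) := by
      field_simp
    have e2 : (K-1)*((L + 1/2)/(K + 2*L - 2)) = ((K-1)*(L + 1/2))/(K + 2*L - 2) :=
      (mul_div_assoc _ _ _).symm
    rw [e1, e2, div_lt_div_iff₀ (by positivity) hx]
    nlinarith [hcore]
  have h1 : Real.log (K + L - 5/2) ≤ Real.log K + (L - 5/2)/K := by
    have h := Real.log_le_sub_one_of_pos (show (0:ℝ) < (K + L - 5/2)/K by positivity)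
    rw [Real.log_div (ne_of_gt hm1) (ne_of_gt hK0)] at h
    have e : (K + L - 5/2)/K - 1 = (L - 5/2)/K := by field_simp; ring
    linarith [e ▸ h]
  have h2 : (L + 1/2)/(K + 2*L - 2) ≤ Real.log (K + 2*L - 2) - Real.log (K + L - 5/2) := by
    have h := log_ge_one_sub_inv (show (0:ℝ) < (K + 2*L - 2)/(K + L - 5/2) by positivity)
    rw [Real.log_div (ne_of_gt hx) (ne_of_gt hm1)] at h
    have e : 1 - 1/((K + 2*L - 2)/(K + L - 5/2)) = (L + 1/2)/(K + 2*L - 2) := by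
      rw [one_div_div, eq_div_iff hx.ne', sub_mul, div_mul_cancel₀ _ hx.ne']; ring
    linarith [e ▸ h]
  have h3 : Real.log K - Real.log (K-1) ≤ 1/(K-1) := by
    have h := Real.log_le_sub_one_of_pos (show (0:ℝ) < K/(K-1) by positivity)
    rw [Real.log_div (ne_of_gt hK0) (ne_of_gt hK1)] at h
    have e : K/(K-1) - 1 = 1/(K-1) := by field_simp; ring
    linarith [e ▸ h]
  have hlog2 : Real.log 2 ≤ 0.69315 := le_of_lt (by linarith [Real.log_two_lt_d9])
  have hlogK : Real.log K ≤ 0.69315 * L := by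
    rw [hLdef]; nlinarith
  have hmuln : (K-1) * ((L + 1/2)/(K + 2*L - 2))
      ≤ (n:ℝ) * (Real.log (K + 2*L - 2) - Real.log (K + L - 5/2)) := by
    rw [hKn]
    exact mul_le_mul_of_nonneg_left h2 hK1.le
  have hloglt : Real.log (K * (K + L - 5/2)^(n+1)) < Real.log ((K-1) * (K + 2*L - 2)^n) := by
    rw [Real.log_mul (ne_of_gt hK0) (ne_of_gt (pow_pos hm1 (n+1))),
        Real.log_mul (ne_of_gt hK1) (ne_of_gt (pow_pos hx n)),
        Real.log_pow, Real.log_pow]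
    push_cast
    rw [hKn]
    nlinarith [h1, h2, h3, hdiv, hmuln, hlogK]
  exact (Real.log_lt_log_iff (by positivity) (by positivity)).mp hloglt

private lemma nat5 (k : ℕ) (hk : 20 ≤ k) : k^5 < 2^k * (k-1) := by
  induction k, hk using Nat.le_induction with
  | base => norm_num
  | succ m hm ih =>
    have a2 : 20*m ≤ m^2 := by nlinarith
    have a3 : 20*m^2 ≤ m^3 := by nlinarith
    have a4 : 20*m^3 ≤ m^4 := by nlinarith
    have a5 : 20*m^4 ≤ m^5 := by nlinarith
    have h1 : (m+1)^5 ≤ 2 * m^5 := by nlinarith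
    have h2 : 2 * (2^m * (m-1)) ≤ 2^(m+1) * ((m+1)-1) := by
      have e : 2^(m+1) = 2 * 2^m := by ring
      rw [e]
      calc 2 * (2^m * (m-1)) = 2 * 2^m * (m-1) := by ring
        _ ≤ 2 * 2^m * ((m+1)-1) := by
            apply Nat.mul_le_mul_left
            omega
    calc (m+1)^5 ≤ 2 * m^5 := h1
      _ < 2 * (2^m * (m-1)) := by linarith
      _ ≤ 2^(m+1) * ((m+1)-1) := h2

private lemma endpoint_hi (n : ℕ) (K X m2 : ℝ) (hKn : (n:ℝ) = K - 1) (hK : 20 ≤ K)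
    (hXe : X = 2^(n+1)*(K-1)/K - (K^2-3*K+1)) (hm2e : m2 = (X + (K-3))/2)
    (h5 : K^5 < 2^(n+1) * (K-1)) :
    K * m2^(n+1) < (K-1) * X^n := by
  subst hm2e
  subst hXe
  have hK0 : (0:ℝ) < K := by linarith
  have hK1 : (0:ℝ) < K - 1 := by linarith
  set A : ℝ := 2^(n+1)*(K-1)/K with hAdef
  have hKA : K * A = 2^(n+1) * (K-1) := by rw [hAdef]; field_simp
  set B : ℝ := K^2 - 3*K + 1 with hBdef
  have hB1 : (1:ℝ) ≤ B := by simp only [hBdef]; nlinarith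
  set c : ℝ := K - 3 with hcdef
  have hc0 : (0:ℝ) < c := by simp only [hcdef]; linarith
  set X : ℝ := A - B with hXdef
  have hBA : B^2 < A := by
    have hKB : K * B^2 ≤ K^5 := by simp only [hBdef]; nlinarith
    have : K * B^2 < K * A := by rw [hKA]; linarith
    exact lt_of_mul_lt_mul_left this hK0.le
  have hKc : K * c = B - 1 := by simp only [hBdef, hcdef]; ring
  have hX : B * (K * c) < X := by
    simp only [hXdef]
    rw [hKc]
    nlinarith [hBA]
  have hX0 : (0:ℝ) < X := by nlinarith [mul_pos (show (0:ℝ) < B by linarith) (mul_pos hK0 hc0)]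
  have hXKc : 0 < X - K * c := by nlinarith [mul_pos hK0 hc0]
  have hcX : c ≤ X := by nlinarith [mul_pos hK0 hc0]
  have hbern := bern_up X c (n+1) hX0 hc0.le hcX
  have hcast : ((n+1 : ℕ) : ℝ) = K := by push_cast; linarith
  rw [hcast] at hbern
  have hquad : K * X^2 < K * (A * (X - K*c)) := by
    have e : A * (X - K*c) = X^2 + (X - B*(K*c)) := by
      simp only [hXdef]; rw [hKc]; ring
    rw [e]
    nlinarith [hX]
  have hXn : (0:ℝ) < X^n := pow_pos hX0 n
  have step : K * (X+c)^(n+1) * (X - K*c) < (K-1) * X^n * 2^(n+1) * (X - K*c) := by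
    calc K * (X+c)^(n+1) * (X - K*c) = K * ((X+c)^(n+1) * (X - K*c)) := by ring
      _ ≤ K * X^(n+1+1) := mul_le_mul_of_nonneg_left hbern hK0.le
      _ = (K * X^2) * X^n := by ring
      _ < (K * (A * (X - K*c))) * X^n := mul_lt_mul_of_pos_right hquad hXn
      _ = (K * A) * (X - K*c) * X^n := by ring
      _ = (K-1) * X^n * 2^(n+1) * (X - K*c) := by rw [hKA]; ring
  have step2 : K * (X+c)^(n+1) < (K-1) * X^n * 2^(n+1) :=
    lt_of_mul_lt_mul_right step hXKc.le
  have e2 : K * ((X+c)/2)^(n+1) = K * (X+c)^(n+1) / 2^(n+1) := by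
    rw [div_pow]; ring
  calc K * ((X+c)/2)^(n+1) = K * (X+c)^(n+1) / 2^(n+1) := e2
    _ < (K-1) * X^n := by
        rw [div_lt_iff₀ (by positivity)]
        linarith [step2]

set_option maxHeartbeats 1000000 in
/-- Comparison of the first directed construction with Vetrík's: for `k` sufficiently
large (here `k ≥ 20`) and every even integer `d` with
`2k + 2log₂ k − 5 ≤ d ≤ 2^k(1 − 1/k) − k² + 4k − 4`, one has
`(k−1)(d−k+3)^{k−1} > k⌊d/2⌋^k`. -/
theorem first_construction_beats_vetrik (k d : ℕ) (hk : 20 ≤ k) (hd_even : Even d)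
    (hd_lo : 2 * (k : ℝ) + 2 * Real.logb 2 (k : ℝ) - 5 ≤ (d : ℝ))
    (hd_hi : (d : ℝ) ≤ 2 ^ k * (1 - 1 / (k : ℝ)) - (k : ℝ) ^ 2 + 4 * k - 4) :
    k * (d / 2) ^ k < (k - 1) * (d + 3 - k) ^ (k - 1) := by
  obtain ⟨r, hr⟩ := hd_even
  obtain ⟨K, hKdef⟩ : ∃ x : ℝ, x = (k:ℝ) := ⟨_, rfl⟩
  rw [← hKdef] at hd_lo hd_hi
  have hK : (20:ℝ) ≤ K := by rw [hKdef]; exact_mod_cast hk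
  have hK0 : (0:ℝ) < K := by linarith
  have hK1 : (0:ℝ) < K - 1 := by linarith
  obtain ⟨L, hLdef0⟩ : ∃ x : ℝ, x = Real.logb 2 K := ⟨_, rfl⟩
  rw [← hLdef0] at hd_lo
  have hlog2pos : (0:ℝ) < Real.log 2 := Real.log_pos (by norm_num)
  have hLdef : Real.log K = L * Real.log 2 := by
    rw [hLdef0, Real.logb]; field_simp
  have hL4 : (4:ℝ) ≤ L := by
    have h16 : Real.log 16 ≤ Real.log K := by
      apply Real.log_le_log (by norm_num) (by linarith)
    have e : Real.log 16 = 4 * Real.log 2 := by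
      have : (16:ℝ) = 2^(4:ℕ) := by norm_num
      rw [this, Real.log_pow]; push_cast; ring
    rw [e, hLdef] at h16
    exact le_of_mul_le_mul_right h16 hlog2pos
  -- L ≤ 2√K / (e log 2)
  obtain ⟨S, hSdef⟩ : ∃ x : ℝ, x = Real.sqrt K := ⟨_, rfl⟩
  have hS2 : S^2 = K := by rw [hSdef]; exact Real.sq_sqrt hK0.le
  have hS0 : (0:ℝ) < S := by rw [hSdef]; exact Real.sqrt_pos.mpr hK0
  have hlogS : Real.log S ≤ S / Real.exp 1 := by
    have h := Real.log_le_sub_one_of_pos (show (0:ℝ) < S / Real.exp 1 by positivity)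
    rw [Real.log_div (ne_of_gt hS0) (Real.exp_ne_zero 1), Real.log_exp] at h
    linarith
  have hlogK2 : Real.log K = 2 * Real.log S := by
    rw [← hS2, Real.log_pow]; push_cast; ring
  have h1884 : 1.884 * L ≤ 2 * S := by
    have he : (2.7182818:ℝ) < Real.exp 1 := by
      have := Real.exp_one_gt_d9; linarith
    have hl2 : (0.6931471:ℝ) < Real.log 2 := by
      have := Real.log_two_gt_d9; linarith
    have hLe : L * (Real.log 2 * Real.exp 1) ≤ 2 * S := by
      have h0 : L * Real.log 2 * Real.exp 1 ≤ (2 * (S / Real.exp 1)) * Real.exp 1 := by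
        apply mul_le_mul_of_nonneg_right _ (Real.exp_pos 1).le
        rw [← hLdef, hlogK2]; linarith
      have e : (2 * (S / Real.exp 1)) * Real.exp 1 = 2 * S := by
        field_simp
      rw [e] at h0; linarith [h0]
    have hprod : (1.884:ℝ) ≤ Real.log 2 * Real.exp 1 := by nlinarith
    calc 1.884 * L ≤ (Real.log 2 * Real.exp 1) * L :=
          mul_le_mul_of_nonneg_right hprod (by linarith)
      _ = L * (Real.log 2 * Real.exp 1) := mul_comm _ _
      _ ≤ 2 * S := hLe
  have hcube : 3.549 * L^3 ≤ 4 * (L * K) := by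
    have hsq : (1.884 * L)^2 ≤ (2*S)^2 := by
      apply pow_le_pow_left₀ (by linarith) h1884
    nlinarith [hS2, hL4]
  -- m
  obtain ⟨m, hmdef⟩ : ∃ x : ℝ, x = (r:ℝ) := ⟨_, rfl⟩
  have hd2 : (d:ℝ) = 2*m := by rw [hmdef, hr]; push_cast; ring
  have hm1 : K + L - 5/2 ≤ m := by
    rw [hd2] at hd_lo; linarith
  have hm0 : (0:ℝ) < m := by linarith
  -- n
  obtain ⟨n, hndef⟩ : ∃ x : ℕ, x = k - 1 := ⟨_, rfl⟩
  have hn1 : n + 1 = k := by omega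
  have hncast : (n:ℝ) = K - 1 := by
    rw [hndef, hKdef]
    push_cast [Nat.cast_sub (by omega : 1 ≤ k)]
    ring
  -- c and s
  obtain ⟨c, hcdef⟩ : ∃ x : ℝ, x = K - 3 := ⟨_, rfl⟩
  have hc0 : (0:ℝ) < c := by simp only [hcdef]; linarith
  obtain ⟨s, hsdef⟩ : ∃ x : ℝ, x = c / m := ⟨_, rfl⟩
  have hs0 : (0:ℝ) < s := by rw [hsdef]; exact div_pos hc0 hm0
  have hsm : s * m = c := by rw [hsdef]; exact div_mul_cancel₀ _ hm0.ne'
  -- KEY inequality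
  have key : K * c < (K-1) * (s * (2 - s)^n) := by
    rcases le_total s (2/K) with hcase | hcase
    · -- Case B : s small, m large
      obtain ⟨m2, hm2def⟩ : ∃ x : ℝ, x = (2^(n+1)*(K-1)/K - (K^2-3*K+1) + (K-3))/2 := ⟨_, rfl⟩
      have hm2 : m ≤ m2 := by
        have e : 2 * m2 = 2^k*(1 - 1/K) - K^2 + 4*K - 4 := by
          rw [hm2def, hn1]
          field_simp
          ring
        rw [hd2] at hd_hi
        linarith
      have hm20 : (0:ℝ) < m2 := lt_of_lt_of_le hm0 hm2
      obtain ⟨smin, hsmindef⟩ : ∃ x : ℝ, x = c / m2 := ⟨_, rfl⟩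
      have hsmin0 : (0:ℝ) < smin := by rw [hsmindef]; exact div_pos hc0 hm20
      have hsmins : smin ≤ s := by
        rw [hsmindef, hsdef, div_le_div_iff₀ hm20 hm0]
        exact mul_le_mul_of_nonneg_left hm2 hc0.le
      have hKs : ((n:ℝ) + 1) * s ≤ 2 := by
        rw [hncast]
        have : K * s ≤ K * (2/K) := mul_le_mul_of_nonneg_left hcase hK0.le
        rw [mul_div_cancel₀ _ (ne_of_gt hK0)] at this
        linarith
      have hmono := caseB_mono s smin n (by omega) hsmin0 hsmins hKs
      have hend : K * c < (K-1) * (smin * (2 - smin)^n) := by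
        have hk1 : 1 ≤ k := by omega
        have hnat := nat5 k hk
        have hcast5 : ((k:ℝ))^5 < 2^k * ((k:ℝ) - 1) := by
          calc ((k:ℝ))^5 = ((k^5 : ℕ) : ℝ) := by push_cast; ring
            _ < ((2^k * (k-1) : ℕ) : ℝ) := by exact_mod_cast hnat
            _ = 2^k * ((k:ℝ) - 1) := by push_cast [Nat.cast_sub hk1]; ring
        have h5 : K^5 < 2^(n+1) * (K-1) := by
          rw [hn1, hKdef]; exact hcast5
        obtain ⟨X, hXdef⟩ : ∃ X:ℝ, X = 2^(n+1)*(K-1)/K - (K^2-3*K+1) := ⟨_, rfl⟩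
        have hm2e : m2 = (X + (K-3))/2 := by rw [hm2def, hXdef]
        have hhi : K * m2^(n+1) < (K-1) * X^n :=
          endpoint_hi n K X m2 hncast hK hXdef hm2e h5
        have hX2m2 : X = 2*m2 - c := by rw [hm2e, hcdef]; ring
        have hX0 : (0:ℝ) < X := by
          rw [hX2m2]
          have : c < 2*m := by rw [hcdef]; linarith
          linarith
        have h2smin : 2 - smin = X/m2 := by
          rw [hsmindef, hX2m2, eq_div_iff (ne_of_gt hm20), sub_mul,
            div_mul_cancel₀ _ (ne_of_gt hm20)]
        rw [h2smin, hsmindef]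
        have e : (K-1) * (c/m2 * (X/m2)^n) = ((K-1) * (c * X^n))/m2^(n+1) := by
          rw [div_pow, div_mul_div_comm, ← pow_succ']
          ring
        rw [e, lt_div_iff₀ (by positivity)]
        have hmul := mul_lt_mul_of_pos_left hhi hc0
        calc K * c * m2^(n+1) = c * (K * m2^(n+1)) := by ring
          _ < c * ((K-1) * X^n) := hmul
          _ = (K-1) * (c * X^n) := by ring
      calc K * c < (K-1) * (smin * (2 - smin)^n) := hend
        _ ≤ (K-1) * (s * (2 - s)^n) := mul_le_mul_of_nonneg_left hmono hK1.le
    · -- Case A : s large, m small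
      obtain ⟨m1, hm1def⟩ : ∃ x : ℝ, x = K + L - 5/2 := ⟨_, rfl⟩
      have hm10 : (0:ℝ) < m1 := by simp only [hm1def]; linarith
      obtain ⟨smax, hsmaxdef⟩ : ∃ x : ℝ, x = c / m1 := ⟨_, rfl⟩
      have hssmax : s ≤ smax := by
        have hm1m : m1 ≤ m := by rw [hm1def]; exact hm1
        rw [hsmaxdef, hsdef, div_le_div_iff₀ hm0 hm10]
        exact mul_le_mul_of_nonneg_left hm1m hc0.le
      have hsmax1 : smax < 1 := by
        rw [hsmaxdef, div_lt_one hm10]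
        simp only [hcdef, hm1def]; linarith
      have h2K : 2/K ≤ smax := le_trans hcase hssmax
      have hns : 2 - smax ≤ (n:ℝ) * s := by
        rw [hncast]
        have h1 : (K-1) * (2/K) ≤ (K-1) * s := mul_le_mul_of_nonneg_left hcase hK1.le
        have e : (K-1) * (2/K) = 2 - 2/K := by field_simp
        rw [e] at h1
        have h2 : 2 - smax ≤ 2 - 2/K := by linarith
        linarith
      have hmono := caseA_mono s smax n hs0 hssmax hsmax1 hns
      have hend : K * c < (K-1) * (smax * (2 - smax)^n) := by
        have hlo := endpoint_lo n K L hncast hK hLdef hL4 hcube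
        have h2smax : 2 - smax = (K + 2*L - 2)/m1 := by
          have hne : m1 ≠ 0 := ne_of_gt hm10
          rw [hsmaxdef, eq_div_iff hne, sub_mul, div_mul_cancel₀ _ hne, hcdef, hm1def]
          ring
        rw [h2smax, hsmaxdef]
        have e : (K-1) * (c/m1 * ((K + 2*L - 2)/m1)^n)
            = ((K-1) * (c * (K + 2*L - 2)^n))/m1^(n+1) := by
          rw [div_pow, div_mul_div_comm, ← pow_succ']
          ring
        rw [e, lt_div_iff₀ (by positivity)]
        have hlo2 : K * m1^(n+1) < (K-1) * (K + 2*L - 2)^n := by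
          rw [hm1def]; exact hlo
        have hmul := mul_lt_mul_of_pos_left hlo2 hc0
        calc K * c * m1^(n+1) = c * (K * m1^(n+1)) := by ring
          _ < c * ((K-1) * (K + 2*L - 2)^n) := hmul
          _ = (K-1) * (c * (K + 2*L - 2)^n) := by ring
      calc K * c < (K-1) * (smax * (2 - smax)^n) := hend
        _ ≤ (K-1) * (s * (2 - s)^n) := mul_le_mul_of_nonneg_left hmono hK1.le
  -- conclude
  have hKm : K * m < (K-1) * (2-s)^n := by
    have h1 : (K * m) * s < ((K-1) * (2-s)^n) * s := by
      calc (K * m) * s = K * c := by rw [← hsm]; ring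
        _ < (K-1) * (s * (2 - s)^n) := key
        _ = ((K-1) * (2-s)^n) * s := by ring
    exact lt_of_mul_lt_mul_right h1 hs0.le
  have hfinal : K * m^(n+1) < (K-1) * (m*(2-s))^n := by
    calc K * m^(n+1) = (K*m) * m^n := by ring
      _ < ((K-1)*(2-s)^n) * m^n := mul_lt_mul_of_pos_right hKm (pow_pos hm0 n)
      _ = (K-1) * (m*(2-s))^n := by rw [mul_pow]; ring
  have hx : (d:ℝ) + 3 - K = m * (2 - s) := by
    have e1 : m * (2 - s) = 2*m - s*m := by ring
    rw [e1, hsm, hd2, hcdef]; ring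
  rw [← hx] at hfinal
  rw [hn1] at hfinal
  rw [hndef, hKdef, hmdef] at hfinal
  have hdk3 : k ≤ d + 3 := by
    have hreal : (k:ℝ) ≤ ((d:ℕ):ℝ) + 3 := by
      rw [← hKdef]; linarith
    have : ((k:ℕ):ℝ) ≤ ((d+3 : ℕ):ℝ) := by push_cast; linarith
    exact_mod_cast this
  have hk1 : 1 ≤ k := by omega
  have hdr : d / 2 = r := by omega
  rw [hdr]
  rw [← Nat.cast_lt (α := ℝ)]
  push_cast [Nat.cast_sub hdk3, Nat.cast_sub hk1]
  convert hfinal using 2 <;> push_cast <;> ring
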